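/- Let Γ be a group acting on a set X and let u : Γ → (X →₀ ℂ) be a 1-cocycle. Suppose a, b ∈ Γ commute and E ∈ X is fixed by a. If u(a) has coefficient x ≠ 0 at E, then u(a) has coefficient x at b⁻ⁿ·E for every n ≥ 0; consequently, if the orbit {bⁿE : n ∈ ℤ} is infinite, then x = 0. -/

import Mathlib

/-- Let `u : Γ → (X →₀ ℂ)` be a 1-cocycle (action `(g·f)(y) = f(g⁻¹y)`), let
`a, b ∈ Γ` commute and let `E ∈ X` be fixed by `a`. If `u(a)` has coefficient
`x ≠ 0` at `E`, then `u(a)` has coefficient `x` at `b⁻ⁿ·E` for every `n ≥ 0`;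
consequently, if the orbit `{bⁿ·E : n ∈ ℤ}` is infinite, then `x = 0`. -/
theorem stmt15 {G X : Type*} [Group G] [MulAction G X]
    (u : G → (X →₀ ℂ))
    (hu : ∀ g h : G, ∀ y : X, u (g * h) y = u g y + u h (g⁻¹ • y))
    (a b : G) (hab : a * b = b * a)
    (E : X) (hE : a • E = E)
    (x : ℂ) (hx : u a E = x) (hx0 : x ≠ 0) :
    (∀ n : ℕ, u a (b⁻¹ ^ n • E) = x) ∧
    ((Set.range fun n : ℤ => b ^ n • E).Infinite → x = 0) := by
  have hcomm : Commute a b := hab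
  have hE' : a⁻¹ • E = E := by
    conv_lhs => rw [← hE]
    rw [inv_smul_smul]
  have hfix : ∀ n : ℕ, a⁻¹ • (b⁻¹ ^ n • E) = b⁻¹ ^ n • E := by
    intro n
    have hc : Commute a⁻¹ (b⁻¹ ^ n) := (hcomm.inv_inv).pow_right n
    rw [← mul_smul, hc.eq, mul_smul, hE']
  have main : ∀ n : ℕ, u a (b⁻¹ ^ n • E) = x := by
    intro n
    induction n with
    | zero => simpa using hx
    | succ n ih =>
      have h1 := hu a b (b⁻¹ ^ n • E)
      have h2 := hu b a (b⁻¹ ^ n • E)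
      rw [hab] at h1
      have key := h1.symm.trans h2
      rw [hfix n] at key
      have step : u a (b⁻¹ • b⁻¹ ^ n • E) = u a (b⁻¹ ^ n • E) := by
        linear_combination -key
      rw [pow_succ', mul_smul, step, ih]
  refine ⟨main, fun hinf => ?_⟩
  exfalso
  have hne : ∀ k : ℤ, b ^ k • E = E → k = 0 := by
    intro k hk
    by_contra hk0
    apply hinf
    have hkmem : b ^ k ∈ MulAction.stabilizer G E := hk
    have hsub : Set.range (fun n : ℤ => b ^ n • E) ⊆
        (fun r : ℤ => b ^ r • E) '' Set.Icc 0 (|k| - 1) := by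
      rintro _ ⟨n, rfl⟩
      refine ⟨n % k, ⟨Int.emod_nonneg n hk0, ?_⟩, ?_⟩
      · have := Int.emod_lt_abs n hk0
        omega
      · have hq : b ^ (k * (n / k)) ∈ MulAction.stabilizer G E := by
          rw [zpow_mul]
          exact Subgroup.zpow_mem _ hkmem _
        have hdecomp : n = n % k + k * (n / k) := by
          have := Int.mul_ediv_add_emod n k; omega
        show b ^ (n % k) • E = b ^ n • E
        calc b ^ (n % k) • E = b ^ (n % k) • (b ^ (k * (n / k)) • E) := by
              rw [(show b ^ (k * (n / k)) • E = E from hq)]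
          _ = b ^ n • E := by rw [← mul_smul, ← zpow_add, ← hdecomp]
    exact ((Set.finite_Icc (0 : ℤ) (|k| - 1)).image _).subset hsub
  have hinj : Function.Injective (fun n : ℤ => b ^ n • E) := by
    intro m l h
    simp only at h
    have : b ^ (-l + m) • E = E := by
      rw [zpow_add, mul_smul, h, ← mul_smul, ← zpow_add, neg_add_cancel, zpow_zero, one_smul]
    have := hne _ this
    omega
  have hinjN : Function.Injective (fun n : ℕ => b⁻¹ ^ n • E) := by
    intro m l h
    simp only at h
    have hm : ∀ j : ℕ, b⁻¹ ^ j = b ^ (-(j : ℤ)) := by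
      intro j; rw [zpow_neg, zpow_natCast, inv_pow]
    rw [hm m, hm l] at h
    have := hinj h
    omega
  have hsub2 : Set.range (fun n : ℕ => b⁻¹ ^ n • E) ⊆ ((u a).support : Set X) := by
    rintro _ ⟨n, rfl⟩
    simp only [Finset.mem_coe, Finsupp.mem_support_iff, main n]
    exact hx0
  exact ((Set.infinite_range_of_injective hinjN).mono hsub2) ((u a).support.finite_toSet)
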